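/- For any position i with 1 ≤ i ≤ m, the prefix of P[i..m] of length MS[i].len occurs in T, and P[i..i+MS[i].len−1] is contained in some MEM of P with respect to T; more precisely, there exists a MEM P[i'..j'] with i' ≤ i and i + MS[i].len − 1 ≤ j'. -/

import Mathlib

/-- The (0-indexed) segment `P[i..j]` of a list, of length `j - i + 1`. -/
def seg (P : List α) (i j : ℕ) : List α := (P.drop i).take (j + 1 - i)

/-- `P[i..j]` is a MEM of `P` w.r.t. `T`: it occurs in `T` but cannot be
extended left or right within `P` and still occur in `T`. -/
def IsMEM (P T : List α) (i j : ℕ) : Prop :=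
  i ≤ j ∧ j < P.length ∧ (seg P i j <:+: T) ∧
    (i = 0 ∨ ¬ (seg P (i - 1) j <:+: T)) ∧
    (j + 1 = P.length ∨ ¬ (seg P i (j + 1) <:+: T))

lemma seg_prefix_mono {α : Type*} (P : List α) (a b b' : ℕ) (h : b ≤ b') :
    seg P a b <+: seg P a b' := by
  unfold seg
  exact List.take_prefix_take_left (by omega)

/-- the prefix of `P[i..]` of length `ms i` occurs in `T`, and the
match `P[i..i + ms i - 1]` is contained in some MEM `P[i'..j']` with `i' ≤ i`
and `i + ms i - 1 ≤ j'`. -/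
theorem match_in_mem {α : Type*} [DecidableEq α] (P T : List α) (ms : ℕ → ℕ)
    (hms_le : ∀ i, ms i ≤ P.length - i)
    (hms_occ : ∀ i, ((P.drop i).take (ms i)) <:+: T)
    (hms_max : ∀ i l, l ≤ P.length - i → ((P.drop i).take l) <:+: T → l ≤ ms i)
    (hchar : ∀ c ∈ P, [c] <:+: T)
    (i : ℕ) (hi : i < P.length) :
    ((P.drop i).take (ms i)) <:+: T ∧
      ∃ i' j', IsMEM P T i' j' ∧ i' ≤ i ∧ i + ms i - 1 ≤ j' := by
  refine ⟨hms_occ i, ?_⟩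
  -- first: ms i ≥ 1
  have hdrop : P.drop i = P[i] :: P.drop (i + 1) := List.drop_eq_getElem_cons hi
  have hone : (P.drop i).take 1 = [P[i]] := by rw [hdrop, List.take_succ_cons, List.take_zero]
  have hms1 : 1 ≤ ms i := by
    apply hms_max i 1 (by omega)
    rw [hone]
    exact hchar _ (P.getElem_mem hi)
  set j := i + ms i - 1 with hj
  have hjlt : j < P.length := by have := hms_le i; omega
  have hsegj : seg P i j = (P.drop i).take (ms i) := by
    unfold seg; congr 1; omega
  have hQ : ∃ a, seg P a j <:+: T := ⟨i, by rw [hsegj]; exact hms_occ i⟩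
  classical
  set i' := Nat.find hQ with hi'
  have hQ' : seg P i' j <:+: T := Nat.find_spec hQ
  have hi'le : i' ≤ i := Nat.find_min' hQ (by rw [hsegj]; exact hms_occ i)
  -- right extension
  set R := fun k => j ≤ k ∧ seg P i' k <:+: T with hR
  set j' := Nat.findGreatest R (P.length - 1) with hj'
  have hRj : R j := ⟨le_refl _, hQ'⟩
  have hjle : j ≤ P.length - 1 := by omega
  have hRj' : R j' := Nat.findGreatest_spec hjle hRj
  have hj'le : j' ≤ P.length - 1 := Nat.findGreatest_le _
  have hjj' : j ≤ j' := Nat.le_findGreatest hjle hRj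
  refine ⟨i', j', ⟨by omega, by omega, hRj'.2, ?_, ?_⟩, hi'le, by omega⟩
  · -- left maximality
    rcases Nat.eq_zero_or_pos i' with h0 | h0
    · exact Or.inl h0
    · refine Or.inr fun hinf => ?_
      have : seg P (i' - 1) j <:+: T :=
        ((seg_prefix_mono P (i' - 1) j j' hjj').isInfix).trans hinf
      exact Nat.find_min hQ (by omega) this
  · -- right maximality
    rcases Nat.lt_or_ge (j' + 1) P.length with hlt | hge
    · refine Or.inr fun hinf => ?_
      have : ¬ R (j' + 1) := Nat.findGreatest_is_greatest (n := P.length - 1) (by omega) (by omega)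
      exact this ⟨by omega, hinf⟩
    · exact Or.inl (by omega)
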